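/- Let p, q, r be finite types, Φ a real matrix (p × q), P a real matrix (r × p), and let ε ≥ 0 and β > 0 be real numbers satisfying ‖P*Φ‖ + β*ε*‖Φ‖ ≤ β. Then for every real matrix Δ (q × p) with ‖Δ‖ ≤ ε such that I - Φ*Δ is invertible, one has ‖P*Φ + P*Φ*Δ*(I - Φ*Δ)⁻¹*Φ‖ ≤ β. -/

import Mathlib

open Matrix

attribute [local instance] Matrix.linftyOpNormedAddCommGroup

/-- Theorem 3: the convex condition `‖PΦ‖ + βε‖Φ‖ ≤ β` is sufficient for the robust
norm bound `‖PΦ + PΦΔ(I - ΦΔ)⁻¹Φ‖ ≤ β` to hold for every perturbation `Δ` with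
`‖Δ‖ ≤ ε` (in the `ℓ∞ → ℓ∞` induced norm). -/
theorem stmt6 {p q r : Type*} [Fintype p] [Fintype q] [Fintype r]
    [DecidableEq p] [DecidableEq q]
    (Φ : Matrix p q ℝ) (P : Matrix r p ℝ) (ε β : ℝ)
    (hε : 0 ≤ ε) (hβ : 0 < β)
    (hcond : ‖P * Φ‖ + β * ε * ‖Φ‖ ≤ β) :
    ∀ Δ : Matrix q p ℝ, ‖Δ‖ ≤ ε → IsUnit (1 - Φ * Δ) →
      ‖P * Φ + P * Φ * Δ * (1 - Φ * Δ)⁻¹ * Φ‖ ≤ β := by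
  intro Δ hΔ hU
  set X := (1 - Φ * Δ)⁻¹ with hXdef
  have hX : X * (1 - Φ * Δ) = 1 :=
    Matrix.nonsing_inv_mul _ ((Matrix.isUnit_iff_isUnit_det _).mp hU)
  have hX' : X = 1 + X * (Φ * Δ) := by
    rw [mul_sub, mul_one, sub_eq_iff_eq_add] at hX
    exact hX
  set M := P * Φ + P * Φ * Δ * X * Φ with hMdef
  by_cases hPΦ : P * Φ = 0
  · have hM0 : M = 0 := by
      rw [hMdef, hPΦ]; simp
    rw [hM0, norm_zero]; exact hβ.le
  · have hM : M = P * Φ + M * Δ * Φ := by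
      rw [hMdef]
      nth_rewrite 1 [hX']
      simp only [Matrix.mul_add, Matrix.add_mul, Matrix.mul_one, Matrix.mul_assoc]
    have hnorm : ‖M‖ ≤ ‖P * Φ‖ + ‖M‖ * ε * ‖Φ‖ := by
      calc ‖M‖ = ‖P * Φ + M * Δ * Φ‖ := by rw [← hM]
        _ ≤ ‖P * Φ‖ + ‖M * Δ * Φ‖ := norm_add_le _ _
        _ ≤ ‖P * Φ‖ + ‖M * Δ‖ * ‖Φ‖ :=
            add_le_add_right (Matrix.linfty_opNorm_mul _ _) _
        _ ≤ ‖P * Φ‖ + ‖M‖ * ‖Δ‖ * ‖Φ‖ :=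
            add_le_add_right (mul_le_mul_of_nonneg_right
              (Matrix.linfty_opNorm_mul _ _) (norm_nonneg _)) _
        _ ≤ ‖P * Φ‖ + ‖M‖ * ε * ‖Φ‖ :=
            add_le_add_right (mul_le_mul_of_nonneg_right
              (mul_le_mul_of_nonneg_left hΔ (norm_nonneg _)) (norm_nonneg _)) _
    have hPΦpos : 0 < ‖P * Φ‖ := norm_pos_iff.mpr hPΦ
    have hΦ : 0 ≤ ‖Φ‖ := norm_nonneg _
    have h1 : ε * ‖Φ‖ < 1 := by nlinarith
    nlinarith [norm_nonneg M]
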